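/- For a uniformly random a ∈ {0,1}, the quantity (1/2)‖cos²(α/2)⟨0|φ_{0,1−a}⟩ + sin²(α/2)⟨a+1|φ_{a+1,1−a}⟩‖² summed over a ∈ {0,1} is at most ((1/√2)cos²(α/2) + sin²(α/2))², given ‖φ_{0,0}‖² + ‖φ_{0,1}‖² ≤ 1 and ‖φ_{i,b}‖ ≤ 1 for all i, b. -/

import Mathlib

/-- The qSlice `⟨j|φ⟩ ∈ H`: the projection of `φ ∈ ℂ³ ⊗ H` under `|j⟩⟨j| ⊗ I`,
viewed as a vector of `H`. -/
noncomputable def qSlice {m : Type*} [Fintype m] (j : Fin 3)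
    (φ : EuclideanSpace ℂ (Fin 3 × m)) : EuclideanSpace ℂ m :=
  (WithLp.equiv 2 (m → ℂ)).symm fun k => φ (j, k)

lemma qSlice_norm_le {m : Type*} [Fintype m] (j : Fin 3)
    (φ : EuclideanSpace ℂ (Fin 3 × m)) : ‖qSlice j φ‖ ≤ ‖φ‖ := by
  rw [qSlice, EuclideanSpace.norm_eq, EuclideanSpace.norm_eq]
  apply Real.sqrt_le_sqrt
  rw [Fintype.sum_prod_type]
  calc ∑ k, ‖(WithLp.equiv 2 (m → ℂ)).symm (fun k => φ (j, k)) k‖ ^ 2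
      = ∑ k, ‖φ (j, k)‖ ^ 2 := by simp [WithLp.equiv_symm_apply, PiLp.toLp_apply]
    _ ≤ ∑ i : Fin 3, ∑ k, ‖φ (i, k)‖ ^ 2 := by
        apply Finset.single_le_sum (f := fun i => ∑ k, ‖φ (i, k)‖ ^ 2)
        · intro i _
          positivity
        · exact Finset.mem_univ j

set_option maxHeartbeats 1000000 in
/-- `(1/2) Σ_a ‖cos²(α/2)⟨0|φ_{0,1−a}⟩ + sin²(α/2)⟨a+1|φ_{a+1,1−a}⟩‖²
≤ ((1/√2)cos²(α/2) + sin²(α/2))²` given `‖φ_{0,0}‖² + ‖φ_{0,1}‖² ≤ 1` and `‖φ_{i,b}‖ ≤ 1`. -/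
theorem bob_cheating_key_bound (α : ℝ) (hα : α ∈ Set.Icc 0 Real.pi)
    {m : Type*} [Fintype m]
    (φ : Fin 3 → Fin 2 → EuclideanSpace ℂ (Fin 3 × m))
    (hsum : ‖φ 0 0‖ ^ 2 + ‖φ 0 1‖ ^ 2 ≤ 1)
    (hall : ∀ (i : Fin 3) (b : Fin 2), ‖φ i b‖ ≤ 1) :
    (1 / 2) * ∑ a : Fin 2,
        ‖(Real.cos (α / 2) : ℂ) ^ 2 • qSlice 0 (φ 0 (a + 1)) +
          (Real.sin (α / 2) : ℂ) ^ 2 • qSlice a.succ (φ a.succ (a + 1))‖ ^ 2 ≤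
      ((Real.sqrt 2)⁻¹ * Real.cos (α / 2) ^ 2 + Real.sin (α / 2) ^ 2) ^ 2 := by
  set c := Real.cos (α / 2) ^ 2 with hc
  set s := Real.sin (α / 2) ^ 2 with hs
  have hc0 : 0 ≤ c := sq_nonneg _
  have hs0 : 0 ≤ s := sq_nonneg _
  set t0 := ‖qSlice 0 (φ 0 1)‖ with ht0
  set t1 := ‖qSlice 0 (φ 0 0)‖ with ht1
  have ht00 : 0 ≤ t0 := norm_nonneg _
  have ht10 : 0 ≤ t1 := norm_nonneg _
  have hsq : t0 ^ 2 + t1 ^ 2 ≤ 1 := by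
    have h0 := qSlice_norm_le 0 (φ 0 1)
    have h1 := qSlice_norm_le 0 (φ 0 0)
    nlinarith [norm_nonneg (φ 0 0), norm_nonneg (φ 0 1)]
  -- bound each summand
  have key : ∀ (a : Fin 2) (t : ℝ), 0 ≤ t → ‖qSlice 0 (φ 0 (a + 1))‖ = t →
      ‖((Real.cos (α / 2) : ℂ)) ^ 2 • qSlice 0 (φ 0 (a + 1)) +
        ((Real.sin (α / 2) : ℂ)) ^ 2 • qSlice a.succ (φ a.succ (a + 1))‖ ≤ c * t + s := by
    intro a t htn hteq
    calc ‖((Real.cos (α / 2) : ℂ)) ^ 2 • qSlice 0 (φ 0 (a + 1)) +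
          ((Real.sin (α / 2) : ℂ)) ^ 2 • qSlice a.succ (φ a.succ (a + 1))‖
        ≤ ‖((Real.cos (α / 2) : ℂ)) ^ 2 • qSlice 0 (φ 0 (a + 1))‖ +
          ‖((Real.sin (α / 2) : ℂ)) ^ 2 • qSlice a.succ (φ a.succ (a + 1))‖ :=
          norm_add_le _ _
      _ = c * ‖qSlice 0 (φ 0 (a + 1))‖ + s * ‖qSlice a.succ (φ a.succ (a + 1))‖ := by
          rw [norm_smul, norm_smul, norm_pow, norm_pow, Complex.norm_real,
            Complex.norm_real, Real.norm_eq_abs, Real.norm_eq_abs, sq_abs, sq_abs]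
      _ ≤ c * t + s := by
          have h1 : ‖qSlice a.succ (φ a.succ (a + 1))‖ ≤ 1 :=
            (qSlice_norm_le _ _).trans (hall _ _)
          rw [hteq]
          nlinarith
  have k0 := key 0 t0 ht00 (by
    rw [show ((0 : Fin 2) + 1) = 1 from rfl, ht0])
  have k1 := key 1 t1 ht10 (by
    rw [show ((1 : Fin 2) + 1) = 0 from rfl, ht1])
  have n0 : (0:ℝ) ≤ ‖((Real.cos (α / 2) : ℂ)) ^ 2 • qSlice 0 (φ 0 (0 + 1)) +
      ((Real.sin (α / 2) : ℂ)) ^ 2 • qSlice (0:Fin 2).succ (φ (0:Fin 2).succ (0 + 1))‖ :=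
    norm_nonneg _
  have n1 : (0:ℝ) ≤ ‖((Real.cos (α / 2) : ℂ)) ^ 2 • qSlice 0 (φ 0 (1 + 1)) +
      ((Real.sin (α / 2) : ℂ)) ^ 2 • qSlice (1:Fin 2).succ (φ (1:Fin 2).succ (1 + 1))‖ :=
    norm_nonneg _
  rw [Fin.sum_univ_two]
  have hr : Real.sqrt 2 ^ 2 = 2 := Real.sq_sqrt (by norm_num)
  have hrpos : 0 < Real.sqrt 2 := Real.sqrt_pos.mpr (by norm_num)
  have hrinv : (Real.sqrt 2)⁻¹ = Real.sqrt 2 / 2 := by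
    rw [eq_div_iff (by norm_num), inv_mul_eq_div, div_eq_iff hrpos.ne']
    nlinarith
  have h2 : (t0 + t1) ^ 2 ≤ 2 := by nlinarith [sq_nonneg (t0 - t1)]
  have hsum2 : t0 + t1 ≤ Real.sqrt 2 := by
    rw [show t0 + t1 = Real.sqrt ((t0 + t1) ^ 2) from
      (Real.sqrt_sq (by linarith)).symm]
    exact Real.sqrt_le_sqrt h2
  have e0 := pow_le_pow_left₀ n0 k0 2
  have e1 := pow_le_pow_left₀ n1 k1 2
  rw [hrinv]
  nlinarith [hr, mul_le_mul_of_nonneg_left hsq (sq_nonneg c),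
    mul_le_mul_of_nonneg_left hsum2 (mul_nonneg hc0 hs0)]
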